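/- Let D ⊆ ℂ be a domain, n ≥ 2, and let w = π_n(μ_1,…,μ_n) with μ_1 ∈ ℂ \ D. Then the affine hyperplane H(w,μ_1) := {(μ_1 + z_1, μ_1 z_1 + z_2, …, μ_1 z_{n-2} + z_{n-1}, μ_1 z_{n-1}) : (z_1,…,z_{n-1}) ∈ ℂ^{n-1}} contains w and is disjoint from S_n(D). -/

import Mathlib

/-- The symmetrization map `π_n : ℂ^n → ℂ^n`, whose `j`-th coordinate is the
`(j+1)`-st elementary symmetric polynomial of the entries. -/
noncomputable def symPoly (n : ℕ) (lam : Fin n → ℂ) : Fin n → ℂ :=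
  fun j => ∑ t ∈ Finset.powersetCard ((j : ℕ) + 1) Finset.univ, ∏ i ∈ t, lam i

/-- The `n`-fold symmetric product `S_n(D) = π_n(D^n)` of a planar set `D`. -/
noncomputable def symProd (n : ℕ) (D : Set ℂ) : Set (Fin n → ℂ) :=
  symPoly n '' {lam | ∀ i, lam i ∈ D}


/-- The affine hyperplane `H(μ) = {(μ + z₁, μ z₁ + z₂, …, μ z_{n-2} + z_{n-1}, μ z_{n-1})}`
associated to `μ ∈ ℂ`, encoded via an auxiliary tuple `z : Fin (n+1) → ℂ`
with `z 0 = 1` and `z n = 0`. -/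
def hplane (n : ℕ) (μ : ℂ) : Set (Fin n → ℂ) :=
  {v | ∃ z : Fin (n + 1) → ℂ, z 0 = 1 ∧ z (Fin.last n) = 0 ∧
    ∀ j : Fin n, v j = μ * z j.castSucc + z j.succ}

/-- If `w = π_n(μ)` with `μ 0 ∉ D`, the affine hyperplane `H(w, μ 0)` passes
through `w` and is disjoint from `S_n(D)`. -/


noncomputable def ES {n : ℕ} (s : Finset (Fin n)) (lam : Fin n → ℂ) (k : ℕ) : ℂ :=
  ∑ t ∈ s.powersetCard k, ∏ i ∈ t, lam i

lemma ES_zero {n : ℕ} (s : Finset (Fin n)) (lam : Fin n → ℂ) : ES s lam 0 = 1 := by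
  simp [ES]

lemma ES_of_card_lt {n : ℕ} (s : Finset (Fin n)) (lam : Fin n → ℂ) {k : ℕ}
    (h : s.card < k) : ES s lam k = 0 := by
  simp [ES, Finset.powersetCard_eq_empty.2 h]

lemma ES_insert {n : ℕ} {a : Fin n} {s : Finset (Fin n)} (h : a ∉ s)
    (lam : Fin n → ℂ) (k : ℕ) :
    ES (insert a s) lam (k + 1) = lam a * ES s lam k + ES s lam (k + 1) := by
  classical
  rw [ES, Finset.powersetCard_succ_insert h, Finset.sum_union, Finset.sum_image]
  · rw [add_comm, ES, ES, Finset.mul_sum]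
    congr 1
    refine Finset.sum_congr rfl fun t ht => ?_
    rw [Finset.prod_insert fun hat => h ((Finset.mem_powersetCard.1 ht).1 hat)]
  · intro t ht u hu htu
    have hat : a ∉ t := fun hat => h ((Finset.mem_powersetCard.1 ht).1 hat)
    have hau : a ∉ u := fun hau => h ((Finset.mem_powersetCard.1 hu).1 hau)
    rw [← Finset.erase_insert hat, ← Finset.erase_insert hau, htu]
  · rw [Finset.disjoint_right]
    rintro t ht hts
    simp only [Finset.mem_image] at ht
    obtain ⟨u, hu, rfl⟩ := ht
    exact h ((Finset.mem_powersetCard.1 hts).1 (Finset.mem_insert_self a u))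

lemma vieta {n : ℕ} (x : ℂ) (lam : Fin n → ℂ) :
    ∏ i, (x - lam i) =
      ∑ k ∈ Finset.range (n + 1), (-1) ^ k * ES Finset.univ lam k * x ^ (n - k) := by
  have hcard : Multiset.card (Multiset.map lam Finset.univ.val) = n := by simp
  have h := congrArg (Polynomial.eval x)
    (Multiset.prod_X_sub_X_eq_sum_esymm (Multiset.map lam Finset.univ.val))
  rw [Polynomial.eval_multiset_prod, Multiset.map_map, Multiset.map_map] at h
  simp only [Function.comp, Polynomial.eval_sub, Polynomial.eval_X, Polynomial.eval_C,
    hcard, Polynomial.eval_finset_sum, Polynomial.eval_mul, Polynomial.eval_pow,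
    Polynomial.eval_neg, Polynomial.eval_one] at h
  rw [Finset.prod_eq_multiset_prod]
  rw [h]
  refine Finset.sum_congr rfl fun k _ => ?_
  rw [Finset.esymm_map_val, ES, mul_assoc]

theorem hplane_mem_and_disjoint (n : ℕ) (hn : 2 ≤ n) (D : Set ℂ)
    (hDopen : IsOpen D) (hDconn : IsConnected D)
    (μ : Fin n → ℂ) (hμ : μ ⟨0, by omega⟩ ∉ D) :
    symPoly n μ ∈ hplane n (μ ⟨0, by omega⟩) ∧
    hplane n (μ ⟨0, by omega⟩) ∩ symProd n D = ∅ := by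
  classical
  set i0 : Fin n := ⟨0, by omega⟩ with hi0
  set x : ℂ := μ i0 with hx
  constructor
  · -- membership
    set rest : Finset (Fin n) := Finset.univ.erase i0 with hrest
    have hins : insert i0 rest = Finset.univ := Finset.insert_erase (Finset.mem_univ i0)
    have hcard : rest.card = n - 1 := by
      rw [hrest, Finset.card_erase_of_mem (Finset.mem_univ i0), Finset.card_univ,
        Fintype.card_fin]
    refine ⟨fun k => ES rest μ (k : ℕ), ?_, ?_, ?_⟩
    · simpa using ES_zero rest μ
    · show ES rest μ ((Fin.last n : Fin (n+1)) : ℕ) = 0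
      rw [Fin.val_last]
      exact ES_of_card_lt rest μ (by omega)
    · intro j
      have : symPoly n μ j = ES Finset.univ μ ((j : ℕ) + 1) := rfl
      rw [this, ← hins, ES_insert (Finset.notMem_erase i0 _)]
      simp
      rfl
  · -- disjointness
    rw [Set.eq_empty_iff_forall_notMem]
    rintro v ⟨⟨z, hz0, hzl, hzv⟩, lam, hlam, hveq⟩
    have key : ∏ i, (x - lam i) = 0 := by
      rw [vieta]
      set g : ℕ → ℂ := fun k =>
        (-1) ^ k * x ^ (n - k) * (if h : k < n + 1 then z ⟨k, h⟩ else 0) with hg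
      have hg0 : g 0 = x ^ n := by
        have h0 : (⟨0, by omega⟩ : Fin (n+1)) = 0 := rfl
        simp [hg, h0, hz0]
      have hgn : g n = 0 := by
        have hl : (⟨n, by omega⟩ : Fin (n+1)) = Fin.last n := rfl
        simp [hg, hl, hzl]
      have hstep : ∀ k ∈ Finset.range n,
          (-1) ^ (k+1) * ES Finset.univ lam (k+1) * x ^ (n - (k+1)) = g (k+1) - g k := by
        intro k hk
        rw [Finset.mem_range] at hk
        have hE : ES Finset.univ lam (k+1) = symPoly n lam ⟨k, hk⟩ := rfl
        have hv' : symPoly n lam ⟨k, hk⟩ = v ⟨k, hk⟩ := by rw [hveq]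
        have hz' := hzv ⟨k, hk⟩
        have hcs : (Fin.castSucc ⟨k, hk⟩ : Fin (n+1)) = ⟨k, by omega⟩ := rfl
        have hsu : (Fin.succ ⟨k, hk⟩ : Fin (n+1)) = ⟨k+1, by omega⟩ := rfl
        rw [hE, hv', hz', hcs, hsu, hg]
        have hk1 : k + 1 < n + 1 := by omega
        have hk2 : k < n + 1 := by omega
        beta_reduce
        rw [dif_pos hk1, dif_pos hk2]
        have hpow : x ^ (n - k) = x ^ (n - (k+1)) * x := by
          rw [← pow_succ]
          congr 1
          omega
        rw [hpow]
        ring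
      rw [Finset.sum_range_succ']
      rw [Finset.sum_congr rfl hstep, Finset.sum_range_sub, hgn, ES_zero]
      simp [hg0]
    obtain ⟨i, _, hi⟩ := Finset.prod_eq_zero_iff.1 key
    have hxd : x ∈ D := by rw [sub_eq_zero.1 hi]; exact hlam i
    exact hμ hxd
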